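/- Let n ≥ 2 and let H = (h_{ij}) be a real n×n unreduced lower Hessenberg matrix with associated polynomial sequence {q_i}_{0 ≤ i ≤ n}. Suppose all complex roots of q_n are simple (i.e. q_n, which has degree n, has n pairwise distinct roots in ℂ). Then the characteristic polynomial of H equals μ·q_n, where μ = ∏_{i=1}^{n−1} h_{i,i+1}; that is, det(x·I − H) = μ·q_n(x) as polynomials in x. -/

import Mathlib

/-- The superdiagonal entry `h_{i+1, i+2}` (1-based) of `H`, with the convention
`h_{n, n+1} = 1`.  Here `i` is 0-based. -/
def superEntry {n : ℕ} (H : Matrix (Fin n) (Fin n) ℝ) (i : ℕ) : ℝ :=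
  if h : i + 1 < n then H ⟨i, by omega⟩ ⟨i + 1, h⟩ else 1

/-- The entry `h_{i+1, j+1}` (1-based) of `H`, with `0` outside the matrix.
Here `i, j` are 0-based. -/
def lowEntry {n : ℕ} (H : Matrix (Fin n) (Fin n) ℝ) (i j : ℕ) : ℝ :=
  if h : i < n ∧ j < n then H ⟨i, h.1⟩ ⟨j, h.2⟩ else 0

/-- `H` is an unreduced lower Hessenberg matrix: `h_{ij} = 0` for `j > i + 1`
(1-based), and all superdiagonal entries `h_{i,i+1}` are nonzero. -/
def IsUnreducedLowerHessenberg {n : ℕ} (H : Matrix (Fin n) (Fin n) ℝ) : Prop :=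
  (∀ i j : Fin n, (i : ℕ) + 1 < (j : ℕ) → H i j = 0) ∧
  (∀ i : ℕ, ∀ h : i + 1 < n, H ⟨i, by omega⟩ ⟨i + 1, h⟩ ≠ 0)

/-- The associated polynomial sequence of a matrix `H` (intended: unreduced lower
Hessenberg): `q 0 = 1` and
`q (i+1) = (1 / h_{i+1,i+2}) * (X * q i − ∑_{j=0}^{i} h_{i+1,j+1} * q j)`
(1-based entries), with the convention `h_{n,n+1} = 1`. -/
noncomputable def assocPoly {n : ℕ} (H : Matrix (Fin n) (Fin n) ℝ) : ℕ → Polynomial ℝ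
  | 0 => 1
  | i + 1 =>
      Polynomial.C (superEntry H i)⁻¹ *
        (Polynomial.X * assocPoly H i -
          ∑ j : Fin (i + 1), Polynomial.C (lowEntry H i j) * assocPoly H j)

set_option maxRecDepth 8000

open Polynomial Matrix

-- key recurrence, cleared of inverses
lemma key_rec {n : ℕ} (H : Matrix (Fin n) (Fin n) ℝ) (hH : IsUnreducedLowerHessenberg H)
    (i : ℕ) (hi : i < n) :
    Polynomial.X * assocPoly H i -
      ∑ j : Fin (i + 1), Polynomial.C (lowEntry H i j) * assocPoly H j
      = Polynomial.C (superEntry H i) * assocPoly H (i + 1) := by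
  have hne : superEntry H i ≠ 0 := by
    unfold superEntry
    split
    · exact hH.2 i ‹_›
    · exact one_ne_zero
  rw [assocPoly, ← mul_assoc, ← Polynomial.C_mul, mul_inv_cancel₀ hne, Polynomial.C_1, one_mul]

lemma mulVec_eq {m : ℕ} (H : Matrix (Fin (m + 1)) (Fin (m + 1)) ℝ)
    (hH : IsUnreducedLowerHessenberg H) :
    (charmatrix H) *ᵥ (fun j : Fin (m + 1) => assocPoly H (j : ℕ))
      = Pi.single (Fin.last m) (assocPoly H (m + 1)) := by
  funext i
  have hrow : ((charmatrix H) *ᵥ (fun j : Fin (m + 1) => assocPoly H (j : ℕ))) i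
      = Polynomial.X * assocPoly H (i : ℕ)
        - ∑ j : Fin (m + 1), Polynomial.C (H i j) * assocPoly H (j : ℕ) := by
    simp only [mulVec, dotProduct, charmatrix_apply, Matrix.diagonal_apply, sub_mul,
      Finset.sum_sub_distrib, ite_mul, zero_mul]
    rw [Finset.sum_ite_eq Finset.univ i (fun j => Polynomial.X * assocPoly H (j : ℕ))]
    simp
  -- turn the full sum into the truncated sum plus possibly the superdiagonal term
  have hsum : ∑ j : Fin (m + 1), Polynomial.C (H i j) * assocPoly H (j : ℕ)
      = (∑ j : Fin ((i : ℕ) + 1), Polynomial.C (lowEntry H i j) * assocPoly H (j : ℕ))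
        + (if h : (i : ℕ) + 1 < m + 1 then
            Polynomial.C (superEntry H i) * assocPoly H ((i : ℕ) + 1) else 0) := by
    have h1 : ∑ j : Fin (m + 1), Polynomial.C (H i j) * assocPoly H (j : ℕ)
        = ∑ j ∈ Finset.range (m + 1),
            Polynomial.C (lowEntry H (i : ℕ) j) * assocPoly H j := by
      rw [Finset.sum_range fun j => Polynomial.C (lowEntry H (i : ℕ) j) * assocPoly H j]
      refine Finset.sum_congr rfl fun j _ => ?_
      congr 1
      unfold lowEntry
      rw [dif_pos ⟨i.isLt, j.isLt⟩]
    have h2 : ∑ j : Fin ((i : ℕ) + 1), Polynomial.C (lowEntry H i j) * assocPoly H (j : ℕ)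
        = ∑ j ∈ Finset.range ((i : ℕ) + 1),
            Polynomial.C (lowEntry H (i : ℕ) j) * assocPoly H j := by
      rw [Finset.sum_range fun j => Polynomial.C (lowEntry H (i : ℕ) j) * assocPoly H j]
    rw [h1, h2]
    have hsub : Finset.range ((i : ℕ) + 1) ⊆ Finset.range (m + 1) := by
      apply Finset.range_subset_range.2; omega
    rw [← Finset.sum_sdiff hsub, add_comm]
    congr 1
    by_cases hlt : (i : ℕ) + 1 < m + 1
    · rw [dif_pos hlt]
      have : Finset.range (m + 1) \ Finset.range ((i : ℕ) + 1)
          = Finset.Ico ((i : ℕ) + 1) (m + 1) := by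
        ext b; simp [Finset.mem_Ico, Finset.mem_sdiff]; omega
      rw [this]
      rw [Finset.sum_eq_single ((i : ℕ) + 1)]
      · have : lowEntry H (i : ℕ) ((i : ℕ) + 1) = superEntry H (i : ℕ) := by
          unfold lowEntry superEntry
          rw [dif_pos ⟨by omega, hlt⟩, dif_pos hlt]
        rw [this]
      · intro b hb hbne
        rw [Finset.mem_Ico] at hb
        have : lowEntry H (i : ℕ) b = 0 := by
          unfold lowEntry
          rw [dif_pos ⟨i.isLt, hb.2⟩]
          exact hH.1 _ _ (by simp; omega)
        rw [this]; simp
      · intro h; exact absurd (Finset.mem_Ico.2 ⟨le_refl _, hlt⟩) h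
    · rw [dif_neg hlt]
      apply Finset.sum_eq_zero
      intro b hb
      rw [Finset.mem_sdiff, Finset.mem_range, Finset.mem_range] at hb
      have : lowEntry H (i : ℕ) b = 0 := by
        unfold lowEntry
        rw [dif_pos ⟨i.isLt, hb.1⟩]
        exact hH.1 _ _ (by simp; omega)
      rw [this]; simp
  rw [hrow, hsum]
  have hkey := key_rec H hH (i : ℕ) i.isLt
  by_cases hlt : (i : ℕ) + 1 < m + 1
  · rw [dif_pos hlt]
    have hine : i ≠ Fin.last m := by
      intro h; rw [h] at hlt; simp [Fin.last] at hlt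
    rw [Pi.single_eq_of_ne hine]
    rw [sub_add_eq_sub_sub, hkey, sub_self]
  · rw [dif_neg hlt]
    have hieq : i = Fin.last m := by
      apply Fin.ext; simp [Fin.last]; omega
    rw [add_zero, hieq, Pi.single_eq_same]
    have hkey' := key_rec H hH m (by omega)
    have hsup : superEntry H m = 1 := by unfold superEntry; rw [dif_neg (by omega)]
    simp only [Fin.val_last]
    rw [hkey', hsup, Polynomial.C_1, one_mul]


lemma adj_entry {m : ℕ} (H : Matrix (Fin (m + 1)) (Fin (m + 1)) ℝ)
    (hH : IsUnreducedLowerHessenberg H) :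
    adjugate (charmatrix H) 0 (Fin.last m)
      = Polynomial.C (∏ i ∈ Finset.range m, superEntry H i) := by
  rw [adjugate_apply]
  set B := (charmatrix H).updateRow (Fin.last m) (Pi.single 0 1) with hB
  rw [det_succ_row B (Fin.last m)]
  have hBlast : ∀ j : Fin (m + 1), B (Fin.last m) j = if j = 0 then 1 else 0 := by
    intro j
    rw [hB, Matrix.updateRow_self]
    by_cases h : j = 0
    · rw [if_pos h, h, Pi.single_eq_same]
    · rw [if_neg h, Pi.single_eq_of_ne h]
  rw [Finset.sum_eq_single (0 : Fin (m + 1))]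
  · rw [hBlast 0, if_pos rfl, mul_one]
    -- the minor is lower triangular
    have hminor : ∀ i j : Fin m,
        (B.submatrix (Fin.last m).succAbove (0 : Fin (m+1)).succAbove) i j
          = charmatrix H i.castSucc j.succ := by
      intro i j
      rw [Matrix.submatrix_apply, Fin.succAbove_last, Fin.succAbove_zero, hB,
        Matrix.updateRow_ne (Fin.castSucc_lt_last i).ne]
    have htri : (B.submatrix (Fin.last m).succAbove (0 : Fin (m+1)).succAbove).BlockTriangular
        OrderDual.toDual := by
      intro i j hij
      simp only [OrderDual.toDual_lt_toDual] at hij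
      rw [hminor]
      have hne : i.castSucc ≠ j.succ := by
        intro h
        have := congrArg Fin.val h
        simp at this
        omega
      rw [charmatrix_apply_ne _ _ _ hne, hH.1 _ _ (by simp; omega), map_zero, neg_zero]
    rw [Matrix.det_of_lowerTriangular _ htri]
    have hdiag : ∀ i : Fin m,
        (B.submatrix (Fin.last m).succAbove (0 : Fin (m+1)).succAbove) i i
          = -Polynomial.C (superEntry H (i : ℕ)) := by
      intro i
      rw [hminor]
      have hne : i.castSucc ≠ i.succ := (Fin.castSucc_lt_succ : i.castSucc < i.succ).ne
      rw [charmatrix_apply_ne _ _ _ hne]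
      congr 1
      unfold superEntry
      rw [dif_pos (by simpa using i.isLt)]
      congr 1 <;> apply Fin.ext <;> simp
    simp only [hdiag]
    have hprod : (∏ i : Fin m, -Polynomial.C (superEntry H (i : ℕ)))
        = (-1) ^ m * Polynomial.C (∏ i ∈ Finset.range m, superEntry H i) := by
      rw [show (∏ i : Fin m, -Polynomial.C (superEntry H (i : ℕ)))
            = ∏ i : Fin m, (-1) * Polynomial.C (superEntry H (i : ℕ)) from
          Finset.prod_congr rfl fun i _ => (neg_one_mul _).symm,
        Finset.prod_mul_distrib, Finset.prod_const, Finset.card_univ, Fintype.card_fin,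
        ← map_prod, Fin.prod_univ_eq_prod_range (fun i => superEntry H i) m]
    rw [hprod]
    simp only [Fin.val_last, Fin.val_zero, add_zero]
    rw [← mul_assoc, ← pow_add, Even.neg_one_pow ⟨m, rfl⟩, one_mul]
  · intro b _ hb
    rw [hBlast b, if_neg hb, mul_zero, zero_mul]
  · intro h; exact absurd (Finset.mem_univ _) h

/-- **Characteristic polynomial via the associated polynomial sequence.**
Let `H` be a real `n × n` unreduced lower Hessenberg matrix whose last associated
polynomial `q_n` has `n` pairwise distinct complex roots (all roots simple).
Then `det(x·I − H) = μ·q_n(x)` with `μ = ∏_{i=1}^{n−1} h_{i,i+1}`. -/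
theorem charpoly_eq_mul_assocPoly (n : ℕ) (hn : 2 ≤ n)
    (H : Matrix (Fin n) (Fin n) ℝ) (hH : IsUnreducedLowerHessenberg H)
    (hsimple :
      Multiset.card (((assocPoly H n).map (algebraMap ℝ ℂ)).roots) = n ∧
      (((assocPoly H n).map (algebraMap ℝ ℂ)).roots).Nodup) :
    H.charpoly =
      Polynomial.C (∏ i ∈ Finset.range (n - 1), superEntry H i) * assocPoly H n := by
  obtain ⟨m, rfl⟩ : ∃ m, n = m + 1 := ⟨n - 1, by omega⟩
  have h1 : adjugate (charmatrix H) *ᵥ (Pi.single (Fin.last m) (assocPoly H (m + 1)))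
      = (charmatrix H).det • (fun j : Fin (m + 1) => assocPoly H (j : ℕ)) := by
    rw [← mulVec_eq H hH, mulVec_mulVec, adjugate_mul, smul_mulVec, one_mulVec]
  have h2 := congrFun h1 0
  simp only [mulVec_single, Pi.smul_apply, smul_eq_mul, op_smul_eq_mul, Matrix.col_apply] at h2
  rw [adj_entry H hH] at h2
  have h0 : assocPoly H ((0 : Fin (m + 1)) : ℕ) = 1 := by
    rw [Fin.val_zero]
    rw [assocPoly]
  rw [h0, mul_one] at h2
  unfold Matrix.charpoly
  rw [← h2]
  congr 2
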